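/- Let (X, dist) be a metric space, let μ be a Borel measure on X, and let P be a perimeter structure on (X, μ). Suppose there exist a real number s ≥ 1 and ε > 0 such that: (1) there is a maximal ε-separated net Y ⊆ X and a constant C₁ < ∞ such that for every nonempty finite subset S ⊆ Y one has (card S)^((s-1)/s) ≤ C₁ · card ∂S, where ∂S := {y ∈ Y \ S : ∃ x ∈ S, dist(y, x) ≤ 2ε}; (2) there exist constants c ≥ 1 and C₂ < ∞ such that for every r ∈ {ε, 3ε}, every y ∈ Y and every nonempty open connected set E ⊆ X with compact closure and P(E, X) < ∞, one has (min{μ(E ∩ B(y, r)), μ((X \ E) ∩ B(y, r))})^((s-1)/s) ≤ C₂ · P(E, B(y, c·r)); (3) for every r > 0, sup_{y ∈ Y} card(B(y, r) ∩ Y) < ∞; (4) there are constants 0 < c₋ ≤ c₊ < ∞ with c₋ ≤ μ(B(y, ε)) ≤ c₊ for all y ∈ Y. Then there exists a constant C < ∞ such that μ(E)^((s-1)/s) ≤ C · P(E, X) for every nonempty open connected set E ⊆ X with compact closure and P(E, X) < ∞. -/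

import Mathlib

open MeasureTheory Metric Set ENNReal

private lemma rpow_sum_le_sum_rpow' {ι : Type*} (F : Finset ι) (f : ι → ℝ≥0∞) {p : ℝ}
    (hp : 0 < p) (hp1 : p ≤ 1) :
    (∑ i ∈ F, f i) ^ p ≤ ∑ i ∈ F, f i ^ p := by
  classical
  induction F using Finset.induction with
  | empty => simp [ENNReal.zero_rpow_of_pos hp]
  | insert _ _ hx ih =>
      rw [Finset.sum_insert hx, Finset.sum_insert hx]
      exact (ENNReal.rpow_add_le_add_rpow _ _ hp.le hp1).trans (by gcongr)

private lemma overlap_sum_le' {X : Type*} [MetricSpace X] [MeasurableSpace X] [BorelSpace X]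
    {Y : Set X} {ε : ℝ} (hmax : ∀ x : X, ∃ y ∈ Y, dist x y < ε)
    (ρ : ℝ) (N : ℕ) (hN : ∀ y ∈ Y, (ball y (ρ + ε) ∩ Y).encard ≤ N)
    (ν : Measure X) (F : Finset X) (hF : ↑F ⊆ Y) :
    ∑ y ∈ F, ν (ball y ρ) ≤ N * ν Set.univ := by
  classical
  calc ∑ y ∈ F, ν (ball y ρ)
      = ∑ y ∈ F, ∫⁻ x, (ball y ρ).indicator 1 x ∂ν := by
        refine Finset.sum_congr rfl fun y _ => ?_
        rw [lintegral_indicator_one measurableSet_ball]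
    _ = ∫⁻ x, ∑ y ∈ F, (ball y ρ).indicator 1 x ∂ν :=
        (lintegral_finset_sum F fun y _ => measurable_one.indicator measurableSet_ball).symm
    _ ≤ ∫⁻ _, (N : ℝ≥0∞) ∂ν := by
        refine lintegral_mono fun x => ?_
        obtain ⟨y₀, hy₀Y, hy₀⟩ := hmax x
        have hsub : (↑(F.filter fun y => x ∈ ball y ρ) : Set X) ⊆ ball y₀ (ρ + ε) ∩ Y := by
          intro y hy
          simp only [Finset.coe_filter, Set.mem_setOf_eq] at hy
          obtain ⟨hyF, hyx⟩ := hy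
          refine ⟨mem_ball.2 ?_, hF hyF⟩
          calc dist y y₀ ≤ dist y x + dist x y₀ := dist_triangle _ _ _
            _ < ρ + ε := add_lt_add (by rw [dist_comm]; exact mem_ball.1 hyx) hy₀
        have hcard : ((F.filter fun y => x ∈ ball y ρ).card : ℝ≥0∞) ≤ N := by
          have h1 := (Set.encard_le_encard hsub).trans (hN y₀ hy₀Y)
          rw [Set.encard_coe_eq_coe_finsetCard] at h1
          exact_mod_cast h1
        calc ∑ y ∈ F, (ball y ρ).indicator 1 x
            = ((F.filter fun y => x ∈ ball y ρ).card : ℝ≥0∞) := by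
              simp [Set.indicator_apply]
          _ ≤ (N : ℝ≥0∞) := hcard
    _ = N * ν Set.univ := lintegral_const _

/-- Axiomatic transition from a rough isoperimetric inequality on a maximal
`ε`-separated net together with a weak relative isoperimetric inequality at
scales `ε` and `3ε` to a global `s`-dimensional isoperimetric inequality
(Theorem on global isoperimetric inequalities in metric measure spaces with a
perimeter structure). -/
theorem global_isoperimetric_inequality
    {X : Type*} [MetricSpace X] [MeasurableSpace X] [BorelSpace X]
    (μ : Measure X) (P : Set X → Measure X)
    (s ε : ℝ) (hs : 1 ≤ s) (hε : 0 < ε)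
    (Y : Set X)
    -- `Y` is a maximal `ε`-separated net
    (hsep : ∀ y ∈ Y, ∀ y' ∈ Y, y ≠ y' → ε ≤ dist y y')
    (hmax : ∀ x : X, ∃ y ∈ Y, dist x y < ε)
    -- (1) rough `s`-dimensional isoperimetric inequality on the net
    (C₁ : ℝ≥0∞) (hC₁ : C₁ < ⊤)
    (hrough : ∀ S : Set X, S ⊆ Y → S.Finite → S.Nonempty →
      ((S.encard : ℝ≥0∞)) ^ ((s - 1) / s) ≤
        C₁ * (({y ∈ Y \ S | ∃ x ∈ S, dist y x ≤ 2 * ε}).encard : ℝ≥0∞))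
    -- (2) weak relative `s`-dimensional isoperimetric inequality at scales `ε` and `3ε`
    (c : ℝ) (hc : 1 ≤ c) (C₂ : ℝ≥0∞) (hC₂ : C₂ < ⊤)
    (hrel : ∀ r ∈ ({ε, 3 * ε} : Set ℝ), ∀ y ∈ Y, ∀ E : Set X,
      E.Nonempty → IsOpen E → IsConnected E → IsCompact (closure E) →
      P E Set.univ < ⊤ →
      (min (μ (E ∩ ball y r)) (μ (Eᶜ ∩ ball y r))) ^ ((s - 1) / s) ≤
        C₂ * P E (ball y (c * r)))
    -- (3) uniformly bounded number of net points in balls of any fixed radius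
    (hloc : ∀ r : ℝ, 0 < r → ∃ N : ℕ, ∀ y ∈ Y, (ball y r ∩ Y).encard ≤ N)
    -- (4) uniform volume bounds for `ε`-balls centered at net points
    (cminus cplus : ℝ≥0∞) (h0 : 0 < cminus) (hle : cminus ≤ cplus) (hfin : cplus < ⊤)
    (hvol : ∀ y ∈ Y, cminus ≤ μ (ball y ε) ∧ μ (ball y ε) ≤ cplus) :
    ∃ C : ℝ≥0∞, C < ⊤ ∧ ∀ E : Set X,
      E.Nonempty → IsOpen E → IsConnected E → IsCompact (closure E) →
      P E Set.univ < ⊤ →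
      (μ E) ^ ((s - 1) / s) ≤ C * P E Set.univ := by
  classical
  have hs0 : (0:ℝ) < s := lt_of_lt_of_le one_pos hs
  set α : ℝ := (s - 1) / s with hα_def
  have hα0 : 0 ≤ α := div_nonneg (by linarith) hs0.le
  have hα1 : α ≤ 1 := by rw [hα_def, div_le_one hs0]; linarith
  rcases hα0.eq_or_lt with hα | hα
  · -- degenerate exponent `α = 0`
    refine ⟨C₂, hC₂, fun E hne hop hconn hcpt hper => ?_⟩
    obtain ⟨x, hx⟩ := hne
    obtain ⟨y, hyY, hxy⟩ := hmax x
    have h := hrel ε (Set.mem_insert _ _) y hyY E ⟨x, hx⟩ hop hconn hcpt hper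
    rw [← hα, ENNReal.rpow_zero] at h ⊢
    exact h.trans (mul_le_mul_right (measure_mono (Set.subset_univ _)) C₂)
  · -- main case `0 < α`
    obtain ⟨N₁, hN₁⟩ := hloc (c * ε + ε) (by nlinarith)
    obtain ⟨N₂, hN₂⟩ := hloc (c * (3 * ε) + ε) (by nlinarith)
    obtain ⟨N₃, hN₃⟩ := hloc (3 * ε) (by linarith)
    set q : ℝ≥0∞ := (cminus / 2) ^ α with hq_def
    have hhalf_pos : 0 < cminus / 2 := ENNReal.div_pos h0.ne' (by norm_num)
    have hhalf_ne_top : cminus / 2 ≠ ⊤ := ((ENNReal.half_le_self).trans_lt (hle.trans_lt hfin)).ne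
    have hq0 : q ≠ 0 := (ENNReal.rpow_pos hhalf_pos hhalf_ne_top).ne'
    have hfin' : cplus ≠ ⊤ := hfin.ne
    refine ⟨cplus ^ α * C₁ * (C₂ * N₂ / q) + C₂ * N₁, ?_, fun E hne hop hconn hcpt hper => ?_⟩
    · -- finiteness of the constant
      have h1 : cplus ^ α ≠ ⊤ := ENNReal.rpow_ne_top_of_nonneg hα0 hfin'
      have h2 : C₂ * N₂ / q ≠ ⊤ :=
        (ENNReal.div_lt_top (ENNReal.mul_ne_top hC₂.ne (ENNReal.natCast_ne_top _)) hq0).ne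
      exact ENNReal.add_lt_top.2 ⟨(ENNReal.mul_ne_top (ENNReal.mul_ne_top h1 hC₁.ne) h2).lt_top,
        (ENNReal.mul_ne_top hC₂.ne (ENNReal.natCast_ne_top _)).lt_top⟩
    · -- main estimate for a fixed set `E`
      set Pt := P E Set.univ with hPt_def
      set YE : Set X := {y ∈ Y | (E ∩ ball y ε).Nonempty} with hYE_def
      have hYE_sub : YE ⊆ Y := fun y hy => hy.1
      obtain ⟨x₀, hx₀⟩ := hne
      obtain ⟨r, hr⟩ := (isBounded_iff_subset_ball x₀).1 ((hcpt.isBounded).subset subset_closure)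
      have hrpos : 0 < r := by have := hr hx₀; rwa [mem_ball, dist_self] at this
      obtain ⟨y₀, hy₀Y, hy₀⟩ := hmax x₀
      obtain ⟨N₄, hN₄⟩ := hloc (r + 2 * ε) (by linarith)
      have hYE_fin : YE.Finite := by
        refine Set.finite_of_encard_le_coe ((Set.encard_le_encard ?_).trans (hN₄ y₀ hy₀Y))
        rintro y ⟨hyY, x, hxE, hxB⟩
        refine ⟨mem_ball.2 ?_, hyY⟩
        have h1 : dist x y < ε := mem_ball.1 hxB
        have h2 : dist x x₀ < r := hr hxE
        calc dist y y₀ ≤ dist y x + dist x x₀ + dist x₀ y₀ := dist_triangle4 _ _ _ _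
          _ < r + 2 * ε := by rw [dist_comm y x]; linarith
      have hF_sub : ↑hYE_fin.toFinset ⊆ Y := by
        rw [Set.Finite.coe_toFinset]; exact hYE_sub
      have hcover : μ E ≤ ∑ y ∈ hYE_fin.toFinset, μ (E ∩ ball y ε) := by
        refine (measure_mono ?_).trans
          (measure_biUnion_finset_le hYE_fin.toFinset fun y => E ∩ ball y ε)
        intro x hx
        obtain ⟨y, hyY, hxy⟩ := hmax x
        exact Set.mem_iUnion₂.2 ⟨y, hYE_fin.mem_toFinset.2 ⟨hyY, x, hx, mem_ball.2 hxy⟩,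
          ⟨hx, mem_ball.2 hxy⟩⟩
      set S : Set X := {y ∈ YE | μ (ball y ε) ≤ 2 * μ (E ∩ ball y ε)} with hS_def
      have hS_subYE : S ⊆ YE := fun y hy => hy.1
      have hS_subY : S ⊆ Y := fun y hy => hYE_sub hy.1
      have hS_fin : S.Finite := hYE_fin.subset hS_subYE
      have hb_top : ∀ y ∈ Y, μ (ball y ε) ≠ ⊤ := fun y hy => ((hvol y hy).2.trans_lt hfin).ne
      have fact1 : ∀ y ∈ Y, μ (E ∩ ball y ε) ≤ cplus :=
        fun y hy => (measure_mono inter_subset_right).trans (hvol y hy).2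
      have fact2 : ∀ y ∈ S, cminus / 2 ≤ μ (E ∩ ball y ε) := by
        intro y hy
        have h2a : μ (ball y ε) / 2 ≤ μ (E ∩ ball y ε) := by
          rw [ENNReal.div_le_iff_le_mul (Or.inl two_ne_zero) (Or.inl ENNReal.ofNat_ne_top),
            mul_comm]
          exact hy.2
        exact (ENNReal.div_le_div_right (hvol y (hS_subY hy)).1 2).trans h2a
      have fact3 : ∀ y ∈ Y, y ∉ S → μ (E ∩ ball y ε) ≤ μ (ball y ε) / 2 := by
        intro y hyY hyS
        by_cases hyYE : y ∈ YE
        · have hnot : ¬ μ (ball y ε) ≤ 2 * μ (E ∩ ball y ε) := fun h => hyS ⟨hyYE, h⟩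
          rw [ENNReal.le_div_iff_mul_le (Or.inl two_ne_zero) (Or.inl ENNReal.ofNat_ne_top),
            mul_comm]
          exact (not_le.1 hnot).le
        · have : E ∩ ball y ε = ∅ := by
            by_contra h
            exact hyYE ⟨hyY, Set.nonempty_iff_ne_empty.2 h⟩
          simp [this]
      have fact4 : ∀ y ∈ Y, y ∉ S → μ (ball y ε) / 2 ≤ μ (Eᶜ ∩ ball y ε) := by
        intro y hyY hyS
        have hsplit : μ (ball y ε) ≤ μ (E ∩ ball y ε) + μ (Eᶜ ∩ ball y ε) := by
          refine (measure_mono ?_).trans (measure_union_le _ _)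
          intro x hx
          by_cases hxE : x ∈ E
          · exact Or.inl ⟨hxE, hx⟩
          · exact Or.inr ⟨hxE, hx⟩
        calc μ (ball y ε) / 2 = μ (ball y ε) - μ (ball y ε) / 2 :=
              (ENNReal.sub_half (hb_top y hyY)).symm
          _ ≤ μ (ball y ε) - μ (E ∩ ball y ε) := tsub_le_tsub_left (fact3 y hyY hyS) _
          _ ≤ μ (Eᶜ ∩ ball y ε) := tsub_le_iff_left.2 hsplit
      -- the discrete boundary of `S`
      set D : Set X := {y ∈ Y \ S | ∃ x ∈ S, dist y x ≤ 2 * ε} with hD_def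
      have hD_subY : D ⊆ Y := fun y hy => hy.1.1
      have hD_fin : D.Finite := by
        refine (Set.Finite.biUnion hS_fin (fun x (hx : x ∈ S) =>
          Set.finite_of_encard_le_coe (hN₃ x (hS_subY hx)))).subset ?_
        rintro y ⟨⟨hyY, hyS⟩, x, hxS, hd⟩
        exact Set.mem_biUnion hxS ⟨mem_ball.2 (lt_of_le_of_lt hd (by linarith)), hyY⟩
      have claimD : ∀ y ∈ D, q ≤ C₂ * P E (ball y (c * (3 * ε))) := by
        rintro y ⟨⟨hyY, hyS⟩, x, hxS, hd⟩
        have hmin : cminus / 2 ≤ min (μ (E ∩ ball y (3 * ε))) (μ (Eᶜ ∩ ball y (3 * ε))) := by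
          refine le_min ?_ ?_
          · refine (fact2 x hxS).trans (measure_mono (Set.inter_subset_inter_right _ ?_))
            intro z hz
            rw [mem_ball] at hz ⊢
            have hd' : dist x y ≤ 2 * ε := by rw [dist_comm]; exact hd
            calc dist z y ≤ dist z x + dist x y := dist_triangle _ _ _
              _ < 3 * ε := by linarith
          · exact ((ENNReal.div_le_div_right (hvol y hyY).1 2).trans (fact4 y hyY hyS)).trans
              (measure_mono (Set.inter_subset_inter_right _ (ball_subset_ball (by linarith))))
        have h := hrel (3 * ε) (Set.mem_insert_iff.2 (Or.inr rfl)) y hyY E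
          ⟨x₀, hx₀⟩ hop hconn hcpt hper
        refine le_trans ?_ h
        rw [hq_def]
        exact ENNReal.rpow_le_rpow hmin hα0
      have hFD_sub : ↑hD_fin.toFinset ⊆ Y := by
        rw [Set.Finite.coe_toFinset]; exact hD_subY
      have hDsum : q * (hD_fin.toFinset.card : ℝ≥0∞) ≤ C₂ * (N₂ * Pt) := by
        calc q * (hD_fin.toFinset.card : ℝ≥0∞) = ∑ _y ∈ hD_fin.toFinset, q := by
              rw [Finset.sum_const, nsmul_eq_mul, mul_comm]
          _ ≤ ∑ y ∈ hD_fin.toFinset, C₂ * P E (ball y (c * (3 * ε))) :=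
              Finset.sum_le_sum fun y hy => claimD y (hD_fin.mem_toFinset.1 hy)
          _ = C₂ * ∑ y ∈ hD_fin.toFinset, P E (ball y (c * (3 * ε))) :=
              (Finset.mul_sum _ _ _).symm
          _ ≤ C₂ * (N₂ * Pt) :=
              mul_le_mul_right (overlap_sum_le' hmax _ N₂ hN₂ (P E) _ hFD_sub) _
      have hq_top : q ≠ ⊤ := ENNReal.rpow_ne_top_of_nonneg hα0 hhalf_ne_top
      have hDcard : (hD_fin.toFinset.card : ℝ≥0∞) ≤ C₂ * (N₂ * Pt) / q := by
        rw [ENNReal.le_div_iff_mul_le (Or.inl hq0) (Or.inl hq_top), mul_comm]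
        exact hDsum
      have hSD : ((hS_fin.toFinset.card : ℝ≥0∞)) ^ α ≤ C₁ * (C₂ * (N₂ * Pt) / q) := by
        rcases S.eq_empty_or_nonempty with hSe | hSne
        · have hzero : hS_fin.toFinset.card = 0 := by simp [hSe]
          rw [hzero]
          simp [ENNReal.zero_rpow_of_pos hα]
        · have h := hrough S hS_subY hS_fin hSne
          rw [← hD_def] at h
          rw [hS_fin.encard_eq_coe_toFinset_card, hD_fin.encard_eq_coe_toFinset_card] at h
          push_cast at h
          exact h.trans (mul_le_mul_right hDcard C₁)
      have hB : ∀ y ∈ hYE_fin.toFinset.filter (· ∉ S),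
          (μ (E ∩ ball y ε)) ^ α ≤ C₂ * P E (ball y (c * ε)) := by
        intro y hy
        obtain ⟨hyF, hyS⟩ := Finset.mem_filter.1 hy
        have hyY : y ∈ Y := hF_sub hyF
        have hmin : min (μ (E ∩ ball y ε)) (μ (Eᶜ ∩ ball y ε)) = μ (E ∩ ball y ε) :=
          min_eq_left ((fact3 y hyY hyS).trans (fact4 y hyY hyS))
        have h := hrel ε (Set.mem_insert _ _) y hyY E ⟨x₀, hx₀⟩ hop hconn hcpt hper
        rwa [hmin] at h
      have hA : ∑ y ∈ hYE_fin.toFinset.filter (· ∈ S), μ (E ∩ ball y ε)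
          ≤ cplus * (hS_fin.toFinset.card : ℝ≥0∞) := by
        calc ∑ y ∈ hYE_fin.toFinset.filter (· ∈ S), μ (E ∩ ball y ε)
            ≤ ∑ _y ∈ hYE_fin.toFinset.filter (· ∈ S), cplus :=
              Finset.sum_le_sum fun y hy => fact1 y (hS_subY (Finset.mem_filter.1 hy).2)
          _ = ((hYE_fin.toFinset.filter (· ∈ S)).card : ℝ≥0∞) * cplus := by
              rw [Finset.sum_const, nsmul_eq_mul]
          _ ≤ (hS_fin.toFinset.card : ℝ≥0∞) * cplus := by
              gcongr
              exact fun y hy => hS_fin.mem_toFinset.2 (Finset.mem_filter.1 hy).2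
          _ = cplus * (hS_fin.toFinset.card : ℝ≥0∞) := mul_comm _ _
      calc (μ E) ^ α ≤ (∑ y ∈ hYE_fin.toFinset, μ (E ∩ ball y ε)) ^ α :=
            ENNReal.rpow_le_rpow hcover hα0
        _ = (∑ y ∈ hYE_fin.toFinset.filter (· ∈ S), μ (E ∩ ball y ε)
              + ∑ y ∈ hYE_fin.toFinset.filter (· ∉ S), μ (E ∩ ball y ε)) ^ α := by
            rw [Finset.sum_filter_add_sum_filter_not]
        _ ≤ (∑ y ∈ hYE_fin.toFinset.filter (· ∈ S), μ (E ∩ ball y ε)) ^ α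
              + (∑ y ∈ hYE_fin.toFinset.filter (· ∉ S), μ (E ∩ ball y ε)) ^ α :=
            ENNReal.rpow_add_le_add_rpow _ _ hα0 hα1
        _ ≤ (cplus * (hS_fin.toFinset.card : ℝ≥0∞)) ^ α
              + ∑ y ∈ hYE_fin.toFinset.filter (· ∉ S), (μ (E ∩ ball y ε)) ^ α :=
            add_le_add (ENNReal.rpow_le_rpow hA hα0) (rpow_sum_le_sum_rpow' _ _ hα hα1)
        _ ≤ cplus ^ α * ((hS_fin.toFinset.card : ℝ≥0∞)) ^ α + C₂ * (N₁ * Pt) := by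
            refine add_le_add ?_ ?_
            · rw [ENNReal.mul_rpow_of_nonneg _ _ hα0]
            · calc ∑ y ∈ hYE_fin.toFinset.filter (· ∉ S), (μ (E ∩ ball y ε)) ^ α
                  ≤ ∑ y ∈ hYE_fin.toFinset.filter (· ∉ S), C₂ * P E (ball y (c * ε)) :=
                    Finset.sum_le_sum hB
                _ = C₂ * ∑ y ∈ hYE_fin.toFinset.filter (· ∉ S), P E (ball y (c * ε)) :=
                    (Finset.mul_sum _ _ _).symm
                _ ≤ C₂ * (N₁ * Pt) := mul_le_mul_right (overlap_sum_le' hmax _ N₁ hN₁ (P E) _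
                    ((Finset.coe_subset.2 (Finset.filter_subset _ _)).trans hF_sub)) _
        _ ≤ cplus ^ α * (C₁ * (C₂ * (N₂ * Pt) / q)) + C₂ * (N₁ * Pt) :=
            add_le_add (mul_le_mul_right hSD _) le_rfl
        _ = (cplus ^ α * C₁ * (C₂ * N₂ / q) + C₂ * N₁) * Pt := by
            rw [div_eq_mul_inv, div_eq_mul_inv]
            ring
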